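/- Let 1 ≤ k < m, let (λ_1, u_1), …, (λ_k, u_k) be exact eigenpairs of A (A u_i = λ_i u_i) with λ_1 ≤ ⋯ ≤ λ_k, and set μ_i = 1/λ_i. Assume δ_{k,i} := min_{k<j≤m} |μ̃_j − μ_i| > 0 for 1 ≤ i ≤ k. Let E_{m,k} be the A-orthogonal projection onto span{ũ_1, …, ũ_k}. Then for each 1 ≤ i ≤ k: ‖u_i − E_{m,k} u_i‖₂ ≤ (1 + μ̃_{k+1}/δ_{k,i}) η_K · ‖u_i − E_{m,k} u_i‖_A. -/

import Mathlib

open Matrix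

/-- The Euclidean (`L²`) norm on `ℝⁿ`: `‖x‖₂ = √(xᵀx)`. -/
noncomputable def l2N {n : ℕ} (x : Fin n → ℝ) : ℝ := Real.sqrt (x ⬝ᵥ x)

/-- The energy norm induced by the matrix `A`: `‖x‖_A = √(xᵀAx)`. -/
noncomputable def aN {n : ℕ} (A : Matrix (Fin n) (Fin n) ℝ) (x : Fin n → ℝ) : ℝ :=
  Real.sqrt (x ⬝ᵥ (A *ᵥ x))

/-- `η_K = sup_{‖g‖₂ = 1} ‖(I - P_K) A⁻¹ g‖_A`, where `P` is the `A`-orthogonal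
projection onto the subspace `K`. -/
noncomputable def etaK {n : ℕ} (A : Matrix (Fin n) (Fin n) ℝ)
    (P : (Fin n → ℝ) →ₗ[ℝ] (Fin n → ℝ)) : ℝ :=
  sSup ((fun g => aN A ((A⁻¹ *ᵥ g) - P (A⁻¹ *ᵥ g))) '' {g | l2N g = 1})

section helpers
variable {n : ℕ} {A : Matrix (Fin n) (Fin n) ℝ}

lemma dsym (hA : A.PosDef) (x y : Fin n → ℝ) : x ⬝ᵥ (A *ᵥ y) = y ⬝ᵥ (A *ᵥ x) := by
  rw [dotProduct_mulVec, ← mulVec_transpose, show Aᵀ = A from hA.1]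
  exact dotProduct_comm _ _

lemma dnn (hA : A.PosDef) (x : Fin n → ℝ) : 0 ≤ x ⬝ᵥ (A *ᵥ x) := by
  simpa using hA.posSemidef.dotProduct_mulVec_nonneg x

lemma dpos (hA : A.PosDef) {x : Fin n → ℝ} (hx : x ≠ 0) : 0 < x ⬝ᵥ (A *ᵥ x) := by
  simpa using hA.dotProduct_mulVec_pos hx

lemma invA_mulVec (hA : A.PosDef) (x : Fin n → ℝ) : A⁻¹ *ᵥ (A *ᵥ x) = x := by
  rw [mulVec_mulVec, Matrix.nonsing_inv_mul _ hA.det_pos.ne'.isUnit, one_mulVec]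

lemma mulVec_invA (hA : A.PosDef) (x : Fin n → ℝ) : A *ᵥ (A⁻¹ *ᵥ x) = x := by
  rw [mulVec_mulVec, Matrix.mul_nonsing_inv _ hA.det_pos.ne'.isUnit, one_mulVec]

lemma aN_nonneg (A : Matrix (Fin n) (Fin n) ℝ) (x : Fin n → ℝ) : 0 ≤ aN A x := Real.sqrt_nonneg _

lemma aN_sq (hA : A.PosDef) (x : Fin n → ℝ) : (aN A x)^2 = x ⬝ᵥ (A *ᵥ x) := by
  rw [aN, Real.sq_sqrt (dnn hA x)]

lemma dself_nonneg (x : Fin n → ℝ) : 0 ≤ x ⬝ᵥ x := by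
  have h : x ⬝ᵥ x = ∑ i, x i * x i := rfl
  rw [h]; exact Finset.sum_nonneg fun i _ => mul_self_nonneg _

lemma dself_pos {x : Fin n → ℝ} (hx : x ≠ 0) : 0 < x ⬝ᵥ x := by
  rcases lt_or_eq_of_le (dself_nonneg x) with h | h
  · exact h
  · exact absurd (dotProduct_self_eq_zero.mp h.symm) hx

lemma l2N_nonneg (x : Fin n → ℝ) : 0 ≤ l2N x := Real.sqrt_nonneg _

lemma l2N_sq (x : Fin n → ℝ) : (l2N x)^2 = x ⬝ᵥ x := by
  rw [l2N, Real.sq_sqrt (dself_nonneg x)]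
end helpers

section helpers2
variable {n : ℕ} {A : Matrix (Fin n) (Fin n) ℝ}

lemma csA (hA : A.PosDef) (x y : Fin n → ℝ) : x ⬝ᵥ (A *ᵥ y) ≤ aN A x * aN A y := by
  rcases eq_or_ne y 0 with rfl | hy
  · simp only [mulVec_zero, dotProduct_zero]
    exact mul_nonneg (aN_nonneg _ _) (aN_nonneg _ _)
  · have hY : 0 < y ⬝ᵥ (A *ᵥ y) := dpos hA hy
    set D := x ⬝ᵥ (A *ᵥ y) with hD
    set X := x ⬝ᵥ (A *ᵥ x) with hX
    set Y := y ⬝ᵥ (A *ᵥ y) with hYd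
    have key : 0 ≤ (Y • x - D • y) ⬝ᵥ (A *ᵥ (Y • x - D • y)) := dnn hA _
    have expand : (Y • x - D • y) ⬝ᵥ (A *ᵥ (Y • x - D • y)) = Y*Y*X - Y*D*D := by
      rw [mulVec_sub, mulVec_smul, mulVec_smul, sub_dotProduct, smul_dotProduct, smul_dotProduct,
        dotProduct_sub, dotProduct_sub, dotProduct_smul, dotProduct_smul, dotProduct_smul, dotProduct_smul]
      have h1 : y ⬝ᵥ (A *ᵥ x) = D := by rw [dsym hA]
      rw [h1, ← hX, ← hYd, ← hD]
      simp only [smul_eq_mul]; ring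
    have hD2 : D*D ≤ X*Y := by nlinarith
    have hx2 : (aN A x)^2 = X := aN_sq hA x
    have hy2 : (aN A y)^2 = Y := aN_sq hA y
    calc D ≤ |D| := le_abs_self D
      _ = Real.sqrt (D^2) := (Real.sqrt_sq_eq_abs D).symm
      _ ≤ Real.sqrt ((aN A x * aN A y)^2) := Real.sqrt_le_sqrt (by nlinarith)
      _ = aN A x * aN A y := Real.sqrt_sq (mul_nonneg (aN_nonneg A x) (aN_nonneg A y))

lemma csL2 (x y : Fin n → ℝ) : x ⬝ᵥ y ≤ l2N x * l2N y := by
  rcases eq_or_ne y 0 with rfl | hy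
  · simp only [dotProduct_zero]
    exact mul_nonneg (l2N_nonneg _) (l2N_nonneg _)
  · have hY : 0 < y ⬝ᵥ y := dself_pos hy
    set D := x ⬝ᵥ y
    set X := x ⬝ᵥ x with hX
    set Y := y ⬝ᵥ y with hYd
    have key : 0 ≤ (Y • x - D • y) ⬝ᵥ (Y • x - D • y) := dself_nonneg _
    have expand : (Y • x - D • y) ⬝ᵥ (Y • x - D • y) = Y*Y*X - Y*D*D := by
      rw [sub_dotProduct, smul_dotProduct, smul_dotProduct, dotProduct_sub, dotProduct_sub,
        dotProduct_smul, dotProduct_smul, dotProduct_smul, dotProduct_smul, dotProduct_comm y x]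
      simp only [smul_eq_mul]; ring
    have hD2 : D*D ≤ X*Y := by nlinarith
    have hx2 : (l2N x)^2 = X := l2N_sq x
    have hy2 : (l2N y)^2 = Y := l2N_sq y
    calc D ≤ |D| := le_abs_self D
      _ = Real.sqrt (D^2) := (Real.sqrt_sq_eq_abs D).symm
      _ ≤ Real.sqrt ((l2N x * l2N y)^2) := Real.sqrt_le_sqrt (by nlinarith)
      _ = l2N x * l2N y := Real.sqrt_sq (mul_nonneg (l2N_nonneg x) (l2N_nonneg y))

lemma l2N_smul (c : ℝ) (x : Fin n → ℝ) : l2N (c • x) = |c| * l2N x := by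
  rw [l2N, l2N, smul_dotProduct, dotProduct_smul, smul_eq_mul, smul_eq_mul, ← mul_assoc,
    show c*c = |c|^2 by rw [sq_abs]; ring, Real.sqrt_mul (by positivity), Real.sqrt_sq (abs_nonneg c)]

lemma aN_smul (A : Matrix (Fin n) (Fin n) ℝ) (c : ℝ) (x : Fin n → ℝ) : aN A (c • x) = |c| * aN A x := by
  rw [aN, aN, mulVec_smul, smul_dotProduct, dotProduct_smul, smul_eq_mul, smul_eq_mul, ← mul_assoc,
    show c*c = |c|^2 by rw [sq_abs]; ring, Real.sqrt_mul (by positivity), Real.sqrt_sq (abs_nonneg c)]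

lemma l2N_pos {x : Fin n → ℝ} (hx : x ≠ 0) : 0 < l2N x := by
  rw [l2N]
  exact Real.sqrt_pos.mpr (dself_pos hx)
end helpers2

section eta
variable {n : ℕ} {A : Matrix (Fin n) (Fin n) ℝ}

lemma l2N_continuous : Continuous (fun x : Fin n → ℝ => l2N x) := by
  have h : (fun x : Fin n → ℝ => l2N x) = fun x => Real.sqrt (∑ i, x i * x i) := rfl
  rw [h]
  exact Real.continuous_sqrt.comp
    (continuous_finset_sum _ (fun i _ => (continuous_apply i).mul (continuous_apply i)))

lemma abs_le_l2N (x : Fin n → ℝ) (i : Fin n) : |x i| ≤ l2N x := by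
  have h1 : x i * x i ≤ x ⬝ᵥ x := by
    have h : x ⬝ᵥ x = ∑ j, x j * x j := rfl
    rw [h]
    exact Finset.single_le_sum (f := fun j => x j * x j)
      (fun j _ => mul_self_nonneg _) (Finset.mem_univ i)
  calc |x i| = Real.sqrt (x i * x i) := (Real.sqrt_mul_self_eq_abs _).symm
    _ ≤ Real.sqrt (x ⬝ᵥ x) := Real.sqrt_le_sqrt h1
    _ = l2N x := rfl

lemma etaK_bdd (A : Matrix (Fin n) (Fin n) ℝ) (P : (Fin n → ℝ) →ₗ[ℝ] (Fin n → ℝ)) :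
    BddAbove ((fun g => aN A ((A⁻¹ *ᵥ g) - P (A⁻¹ *ᵥ g))) '' {g | l2N g = 1}) := by
  have hS : IsCompact {g : Fin n → ℝ | l2N g = 1} := by
    apply Metric.isCompact_of_isClosed_isBounded
    · exact isClosed_eq l2N_continuous continuous_const
    · apply Metric.isBounded_closedBall (x := (0 : Fin n → ℝ)) (r := 1) |>.subset
      intro g hg
      have : ‖g‖ ≤ 1 := (pi_norm_le_iff_of_nonneg zero_le_one).mpr
        (fun i => by rw [Real.norm_eq_abs]; rw [Set.mem_setOf_eq] at hg
                     exact hg ▸ abs_le_l2N g i)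
      simpa [Metric.mem_closedBall, dist_zero_right] using this
  have hf : Continuous (fun g : Fin n → ℝ => aN A ((A⁻¹ *ᵥ g) - P (A⁻¹ *ᵥ g))) := by
    have hinv : Continuous (fun g : Fin n → ℝ => A⁻¹ *ᵥ g) :=
      LinearMap.continuous_of_finiteDimensional (A⁻¹).mulVecLin
    have hP : Continuous (fun x : Fin n → ℝ => P x) :=
      LinearMap.continuous_of_finiteDimensional P
    have hsub : Continuous (fun g : Fin n → ℝ => (A⁻¹ *ᵥ g) - P (A⁻¹ *ᵥ g)) :=
      hinv.sub (hP.comp hinv)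
    have haN : Continuous (fun x : Fin n → ℝ => aN A x) := by
      have h : (fun x : Fin n → ℝ => aN A x) = fun x => Real.sqrt (x ⬝ᵥ (A *ᵥ x)) := rfl
      rw [h]
      apply Real.continuous_sqrt.comp
      have hmv : Continuous (fun x : Fin n → ℝ => A *ᵥ x) :=
        LinearMap.continuous_of_finiteDimensional A.mulVecLin
      have h2 : (fun x : Fin n → ℝ => x ⬝ᵥ (A *ᵥ x)) = fun x => ∑ i, x i * (A *ᵥ x) i := rfl
      rw [h2]
      exact continuous_finset_sum _ (fun i _ =>
        (continuous_apply i).mul ((continuous_apply i).comp hmv))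
    exact haN.comp hsub
  exact (hS.image hf).bddAbove

lemma etaK_ge (A : Matrix (Fin n) (Fin n) ℝ) (P : (Fin n → ℝ) →ₗ[ℝ] (Fin n → ℝ))
    {g : Fin n → ℝ} (hg : l2N g = 1) :
    aN A ((A⁻¹ *ᵥ g) - P (A⁻¹ *ᵥ g)) ≤ etaK A P :=
  le_csSup (etaK_bdd A P) ⟨g, hg, rfl⟩
end eta

section sums
variable {n : ℕ}

lemma sum_dotProduct' {ι : Type*} (s : Finset ι) (f : ι → Fin n → ℝ) (y : Fin n → ℝ) :
    (∑ j ∈ s, f j) ⬝ᵥ y = ∑ j ∈ s, f j ⬝ᵥ y := by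
  simp only [dotProduct, Finset.sum_apply, Finset.sum_mul]
  exact Finset.sum_comm

lemma dotProduct_sum' {ι : Type*} (s : Finset ι) (y : Fin n → ℝ) (f : ι → Fin n → ℝ) :
    y ⬝ᵥ (∑ j ∈ s, f j) = ∑ j ∈ s, y ⬝ᵥ f j := by
  rw [dotProduct_comm, sum_dotProduct']
  exact Finset.sum_congr rfl fun j _ => dotProduct_comm _ _
end sums


set_option maxHeartbeats 1600000 in
/-- `L²`-norm versus energy-norm error estimate for the first `k` eigenvector
approximations (second part of Theorem 3.2):
`‖u_i − E_{m,k} u_i‖₂ ≤ (1 + μ̃_{k+1}/δ_{k,i}) η_K ‖u_i − E_{m,k} u_i‖_A`. -/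
theorem stmt6 {n m : ℕ} (A : Matrix (Fin n) (Fin n) ℝ) (hA : A.PosDef)
    -- `K` is an `m`-dimensional subspace of `ℝⁿ`
    (K : Submodule ℝ (Fin n → ℝ)) (hK : Module.finrank ℝ K = m)
    -- `P` is the `A`-orthogonal (Galerkin) projection onto `K`
    (P : (Fin n → ℝ) →ₗ[ℝ] (Fin n → ℝ))
    (hPmem : ∀ x, P x ∈ K)
    (hPproj : ∀ x, ∀ y ∈ K, (P x) ⬝ᵥ (A *ᵥ y) = x ⬝ᵥ (A *ᵥ y))
    -- the Ritz pairs `(λ̃_j, ũ_j)` of `A` on `K`, with `A`-orthonormal Ritz vectors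
    (tlam : Fin m → ℝ) (tu : Fin m → (Fin n → ℝ)) (htmono : Monotone tlam)
    (htu : ∀ j, tu j ∈ K)
    (hRitz : ∀ j, ∀ v ∈ K, ((A *ᵥ tu j) - tlam j • tu j) ⬝ᵥ v = 0)
    (htortho : ∀ i j, tu i ⬝ᵥ (A *ᵥ tu j) = if i = j then (1 : ℝ) else 0)
    -- `1 ≤ k < m`
    (k : ℕ) (hk : 1 ≤ k) (hkm : k < m)
    -- `(λ_1, u_1), …, (λ_k, u_k)` are exact eigenpairs of `A` with `λ_1 ≤ ⋯ ≤ λ_k`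
    (lam : Fin k → ℝ) (u : Fin k → (Fin n → ℝ)) (hlmono : Monotone lam)
    (hu : ∀ i, u i ≠ 0) (heig : ∀ i, A *ᵥ u i = lam i • u i)
    -- `δ_{k,i} > 0` is (a lower bound for) `min_{k < j ≤ m} |μ̃_j − μ_i|`,
    -- where `μ_i = 1/λ_i`, `μ̃_j = 1/λ̃_j`
    (δ : Fin k → ℝ) (hδpos : ∀ i, 0 < δ i)
    (hδ : ∀ (i : Fin k) (j : Fin m), k ≤ (j : ℕ) → δ i ≤ |1 / tlam j - 1 / lam i|)
    -- `E` is the `A`-orthogonal projection `E_{m,k}` onto `span{ũ_1, …, ũ_k}`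
    (E : (Fin n → ℝ) →ₗ[ℝ] (Fin n → ℝ))
    (hEmem : ∀ x, E x ∈
      Submodule.span ℝ (Set.range fun i : Fin k => tu (Fin.castLE hkm.le i)))
    (hEproj : ∀ x, ∀ y ∈
      Submodule.span ℝ (Set.range fun i : Fin k => tu (Fin.castLE hkm.le i)),
      (E x) ⬝ᵥ (A *ᵥ y) = x ⬝ᵥ (A *ᵥ y)) :
    ∀ i : Fin k, l2N (u i - E (u i)) ≤
      (1 + (1 / tlam ⟨k, hkm⟩) / δ i) * etaK A P * aN A (u i - E (u i)) := by
  -- basic facts about the Ritz values/vectors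
  have htlam_norm : ∀ j, tlam j * (tu j ⬝ᵥ tu j) = 1 := by
    intro j
    have h0 := hRitz j (tu j) (htu j)
    rw [sub_dotProduct, smul_dotProduct, sub_eq_zero] at h0
    have h1 : (A *ᵥ tu j) ⬝ᵥ tu j = 1 := by
      rw [dotProduct_comm]
      simpa using htortho j j
    rw [h1] at h0
    simpa using h0.symm
  have htlam_pos : ∀ j, 0 < tlam j := by
    intro j
    have h1 := htlam_norm j
    have h2 := dself_nonneg (tu j)
    nlinarith
  have htself : ∀ j, tu j ⬝ᵥ tu j = 1 / tlam j := by
    intro j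
    have hne := (htlam_pos j).ne'
    rw [eq_div_iff hne]
    linarith [htlam_norm j]
  have htuL2 : ∀ j l, j ≠ l → tu j ⬝ᵥ tu l = 0 := by
    intro j l hjl
    have h0 := hRitz j (tu l) (htu l)
    rw [sub_dotProduct, smul_dotProduct, sub_eq_zero] at h0
    have h1 : (A *ᵥ tu j) ⬝ᵥ tu l = 0 := by
      rw [dotProduct_comm]
      simpa [Ne.symm hjl] using htortho l j
    rw [h1] at h0
    have := (htlam_pos j).ne'
    simpa [smul_eq_mul, this] using h0.symm
  -- span of Ritz vectors is K
  have hli : LinearIndependent ℝ tu := by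
    rw [Fintype.linearIndependent_iff]
    intro c hc l
    have h0 : (∑ j, c j • tu j) ⬝ᵥ (A *ᵥ tu l) = 0 := by rw [hc, zero_dotProduct]
    rw [sum_dotProduct'] at h0
    simp only [smul_dotProduct, smul_eq_mul, htortho, mul_ite, mul_one, mul_zero] at h0
    simpa using h0
  have hspan : Submodule.span ℝ (Set.range tu) = K := by
    apply Submodule.eq_of_le_of_finrank_le
    · rw [Submodule.span_le]
      rintro _ ⟨j, rfl⟩
      exact htu j
    · rw [hK, finrank_span_eq_card hli]
      simp
  -- the small span is inside K
  have hsmallspan : Submodule.span ℝ (Set.range fun i : Fin k => tu (Fin.castLE hkm.le i)) ≤ K := by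
    rw [Submodule.span_le]
    rintro _ ⟨l, rfl⟩
    exact htu _
  -- Galerkin orthogonality
  have hGal : ∀ x, ∀ y ∈ K, (x - P x) ⬝ᵥ (A *ᵥ y) = 0 := by
    intro x y hy
    rw [sub_dotProduct, hPproj x y hy, sub_self]
  intro i
  set Kk : Fin m := ⟨k, hkm⟩ with hKk
  have hlam_pos : 0 < lam i := by
    have h1 : u i ⬝ᵥ (A *ᵥ u i) = lam i * (u i ⬝ᵥ u i) := by
      rw [heig i, dotProduct_smul, smul_eq_mul]
    have h2 := dpos hA (hu i)
    have h3 := dself_pos (hu i)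
    nlinarith
  have hμdiff : ∀ j : Fin m, k ≤ (j : ℕ) → 1 / tlam j - 1 / lam i ≠ 0 := by
    intro j hj
    have h1 := hδ i j hj
    have h2 := hδpos i
    intro h
    rw [h, abs_zero] at h1
    linarith
  set e := u i - E (u i) with he
  set s := u i - P (u i) with hs
  have hs_orth : ∀ y ∈ K, s ⬝ᵥ (A *ᵥ y) = 0 := fun y hy => hGal (u i) y hy
  have haNsq_e : (aN A e)^2 = e ⬝ᵥ (A *ᵥ e) := aN_sq hA e
  -- aN s ≤ aN e
  have haNs_le : aN A s ≤ aN A e := by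
    set t := P (u i) - E (u i) with ht
    have htK : t ∈ K := K.sub_mem (hPmem _) (hsmallspan (hEmem _))
    have hest : e = s + t := by
      rw [he, hs, ht]; abel
    have hcross : s ⬝ᵥ (A *ᵥ t) = 0 := hs_orth t htK
    have h2 : e ⬝ᵥ (A *ᵥ e) = s ⬝ᵥ (A *ᵥ s) + t ⬝ᵥ (A *ᵥ t) := by
      rw [hest, mulVec_add, dotProduct_add, add_dotProduct, add_dotProduct,
        dsym hA t s, hcross]
      ring
    have h3 : s ⬝ᵥ (A *ᵥ s) ≤ e ⬝ᵥ (A *ᵥ e) := by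
      have := dnn hA t
      linarith
    exact Real.sqrt_le_sqrt h3
  -- key formula for j with k ≤ j
  have hkey : ∀ j : Fin m, k ≤ (j : ℕ) →
      e ⬝ᵥ (A *ᵥ tu j) = -(tu j ⬝ᵥ s) / (1 / tlam j - 1 / lam i) := by
    intro j hj
    have hEAzero : E (u i) ⬝ᵥ (A *ᵥ tu j) = 0 := by
      obtain ⟨c, hc⟩ := (Submodule.mem_span_range_iff_exists_fun ℝ).mp (hEmem (u i))
      rw [← hc, sum_dotProduct']
      apply Finset.sum_eq_zero
      intro l _
      have hne : Fin.castLE hkm.le l ≠ j := by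
        intro h
        have := congrArg Fin.val h
        simp only [Fin.coe_castLE] at this
        omega
      rw [smul_dotProduct, htortho, if_neg hne, smul_zero]
    have ha : e ⬝ᵥ (A *ᵥ tu j) = lam i * (tu j ⬝ᵥ u i) := by
      rw [he, sub_dotProduct, hEAzero, sub_zero, dsym hA, heig i, dotProduct_smul, smul_eq_mul]
    have hb : lam i * (tu j ⬝ᵥ u i) = tlam j * (tu j ⬝ᵥ P (u i)) := by
      have h1 : tu j ⬝ᵥ (A *ᵥ u i) = lam i * (tu j ⬝ᵥ u i) := by
        rw [heig i, dotProduct_smul, smul_eq_mul]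
      have h2 : tu j ⬝ᵥ (A *ᵥ P (u i)) = tu j ⬝ᵥ (A *ᵥ u i) := by
        rw [dsym hA (tu j) (P (u i)), hPproj (u i) (tu j) (htu j), dsym hA (u i) (tu j)]
      have h3 := hRitz j (P (u i)) (hPmem (u i))
      rw [sub_dotProduct, smul_dotProduct, sub_eq_zero] at h3
      have h4 : (A *ᵥ tu j) ⬝ᵥ P (u i) = tu j ⬝ᵥ (A *ᵥ P (u i)) := by
        rw [dotProduct_comm, dsym hA]
      rw [h4, h2, h1] at h3
      rw [h3, smul_eq_mul]
    have hcP : tu j ⬝ᵥ P (u i) = tu j ⬝ᵥ u i - tu j ⬝ᵥ s := by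
      rw [hs, dotProduct_sub]
      ring
    rw [hcP] at hb
    rw [ha, eq_div_iff (hμdiff j hj)]
    have hT := (htlam_pos j).ne'
    have hL := hlam_pos.ne'
    field_simp
    nlinarith [hb]
  -- e is A-orthogonal to the first k Ritz vectors
  have hzero : ∀ j : Fin m, (j : ℕ) < k → e ⬝ᵥ (A *ᵥ tu j) = 0 := by
    intro j hj
    have hjj : Fin.castLE hkm.le ⟨(j : ℕ), hj⟩ = j := by
      apply Fin.ext
      rfl
    have hmem : tu j ∈ Submodule.span ℝ (Set.range fun l : Fin k => tu (Fin.castLE hkm.le l)) :=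
      Submodule.subset_span ⟨⟨(j : ℕ), hj⟩,
        show tu (Fin.castLE hkm.le ⟨(j : ℕ), hj⟩) = tu j by rw [hjj]⟩
    rw [he, sub_dotProduct, hEproj (u i) (tu j) hmem, sub_self]
  -- bound for vectors in K against s
  have hKs : ∀ v ∈ K, v ⬝ᵥ s ≤ etaK A P * l2N v * aN A s := by
    intro v hv
    rcases eq_or_ne v 0 with rfl | hv0
    · have : l2N (0 : Fin n → ℝ) = 0 := by simp [l2N]
      rw [zero_dotProduct, this, mul_zero, zero_mul]
    · have hsplitv : v ⬝ᵥ s = (A⁻¹ *ᵥ v - P (A⁻¹ *ᵥ v)) ⬝ᵥ (A *ᵥ s)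
          + (P (A⁻¹ *ᵥ v)) ⬝ᵥ (A *ᵥ s) := by
        rw [sub_dotProduct, sub_add_cancel, dsym hA, mulVec_invA hA, dotProduct_comm]
      have hzero2 : (P (A⁻¹ *ᵥ v)) ⬝ᵥ (A *ᵥ s) = 0 := by
        rw [dsym hA]
        exact hs_orth _ (hPmem _)
      have hcs : (A⁻¹ *ᵥ v - P (A⁻¹ *ᵥ v)) ⬝ᵥ (A *ᵥ s)
          ≤ aN A (A⁻¹ *ᵥ v - P (A⁻¹ *ᵥ v)) * aN A s := csA hA _ _
      have hη : aN A (A⁻¹ *ᵥ v - P (A⁻¹ *ᵥ v)) ≤ etaK A P * l2N v := by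
        have hvpos := l2N_pos hv0
        set cc := (l2N v)⁻¹ with hcc
        have hζ : l2N (cc • v) = 1 := by
          rw [l2N_smul, hcc, abs_of_pos (inv_pos.mpr hvpos), inv_mul_cancel₀ hvpos.ne']
        have h1 := etaK_ge A P hζ
        have h2 : (A⁻¹ *ᵥ (cc • v)) - P (A⁻¹ *ᵥ (cc • v))
            = cc • ((A⁻¹ *ᵥ v) - P (A⁻¹ *ᵥ v)) := by
          rw [mulVec_smul, P.map_smul, smul_sub]
        rw [h2, aN_smul, hcc, abs_of_pos (inv_pos.mpr hvpos)] at h1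
        calc aN A (A⁻¹ *ᵥ v - P (A⁻¹ *ᵥ v))
            = l2N v * ((l2N v)⁻¹ * aN A (A⁻¹ *ᵥ v - P (A⁻¹ *ᵥ v))) := by
              field_simp
          _ ≤ l2N v * etaK A P := by
              apply mul_le_mul_of_nonneg_left h1 (l2N_nonneg v)
          _ = etaK A P * l2N v := mul_comm _ _
      calc v ⬝ᵥ s = (A⁻¹ *ᵥ v - P (A⁻¹ *ᵥ v)) ⬝ᵥ (A *ᵥ s) := by
            rw [hsplitv, hzero2, add_zero]
        _ ≤ aN A (A⁻¹ *ᵥ v - P (A⁻¹ *ᵥ v)) * aN A s := hcs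
        _ ≤ (etaK A P * l2N v) * aN A s :=
            mul_le_mul_of_nonneg_right hη (aN_nonneg A s)
        _ = etaK A P * l2N v * aN A s := by ring
  rcases eq_or_ne e 0 with he0 | he0
  · rw [he0]
    have h1 : l2N (0 : Fin n → ℝ) = 0 := by simp [l2N]
    have h2 : aN A (0 : Fin n → ℝ) = 0 := by simp [aN, mulVec_zero, dotProduct_zero, Real.sqrt_zero]
    rw [h1, h2, mul_zero]
  · -- main case: e ≠ 0
    have hNpos : 0 < l2N e := l2N_pos he0
    set g := (l2N e)⁻¹ • e with hgdef
    have hg1 : l2N g = 1 := by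
      rw [hgdef, l2N_smul, abs_of_pos (inv_pos.mpr hNpos), inv_mul_cancel₀ hNpos.ne']
    have hetann : 0 ≤ etaK A P := le_trans (aN_nonneg _ _) (etaK_ge A P hg1)
    set w := A⁻¹ *ᵥ g with hw
    have hAw : A *ᵥ w = g := mulVec_invA hA g
    have hNe : l2N e = e ⬝ᵥ g := by
      rw [hgdef, dotProduct_smul, smul_eq_mul]
      have h1 : e ⬝ᵥ e = (l2N e)^2 := (l2N_sq e).symm
      rw [h1]
      field_simp
    have hsplit : e ⬝ᵥ g = e ⬝ᵥ (A *ᵥ (w - P w)) + e ⬝ᵥ (A *ᵥ P w) := by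
      rw [mulVec_sub, dotProduct_sub, sub_add_cancel, hAw]
    have hT1 : e ⬝ᵥ (A *ᵥ (w - P w)) ≤ aN A e * etaK A P := by
      have h1 := etaK_ge A P hg1
      rw [← hw] at h1
      exact (csA hA e (w - P w)).trans (mul_le_mul_of_nonneg_left h1 (aN_nonneg A e))
    -- expansion of P w in the Ritz basis
    obtain ⟨c, hc⟩ := (Submodule.mem_span_range_iff_exists_fun ℝ).mp
      (show P w ∈ Submodule.span ℝ (Set.range tu) from hspan ▸ hPmem w)
    have hcval : ∀ j, c j = tu j ⬝ᵥ g := by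
      intro j
      have h1 : P w ⬝ᵥ (A *ᵥ tu j) = tu j ⬝ᵥ g := by
        rw [hPproj w (tu j) (htu j), dsym hA, hAw]
      have h2 : P w ⬝ᵥ (A *ᵥ tu j) = c j := by
        rw [← hc, sum_dotProduct']
        simp only [smul_dotProduct, smul_eq_mul, htortho, mul_ite, mul_one, mul_zero]
        simp
      rw [← h2, h1]
    set S : Finset (Fin m) := Finset.univ.filter (fun j => k ≤ (j : ℕ)) with hSdef
    have hT2sum : e ⬝ᵥ (A *ᵥ P w) = ∑ j ∈ S, c j * (e ⬝ᵥ (A *ᵥ tu j)) := by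
      rw [dsym hA, ← hc, sum_dotProduct']
      have hterm : ∀ j : Fin m, (c j • tu j) ⬝ᵥ (A *ᵥ e) = c j * (e ⬝ᵥ (A *ᵥ tu j)) := by
        intro j
        rw [smul_dotProduct, smul_eq_mul, dsym hA (tu j) e]
      rw [Finset.sum_congr rfl (fun j _ => hterm j)]
      refine (Finset.sum_subset (Finset.subset_univ S) ?_).symm
      intro j _ hjS
      have hjk : (j : ℕ) < k := by
        by_contra hcon
        exact hjS (Finset.mem_filter.mpr ⟨Finset.mem_univ j, le_of_not_gt hcon⟩)
      rw [hzero j hjk, mul_zero]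
    set z := ∑ j ∈ S, (c j / (1 / tlam j - 1 / lam i)) • tu j with hz
    have hT2z : e ⬝ᵥ (A *ᵥ P w) = -(z ⬝ᵥ s) := by
      rw [hT2sum, hz, sum_dotProduct', ← Finset.sum_neg_distrib]
      apply Finset.sum_congr rfl
      intro j hjS
      have hjk : k ≤ (j : ℕ) := (Finset.mem_filter.mp hjS).2
      rw [hkey j hjk, smul_dotProduct, smul_eq_mul]
      ring
    have hzK : z ∈ K := Submodule.sum_mem K (fun j _ => K.smul_mem _ (htu j))
    -- Bessel-type bound
    have hBessel : ∑ j ∈ S, tlam j * (tu j ⬝ᵥ g)^2 ≤ 1 := by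
      set q := ∑ j ∈ S, (tlam j * (tu j ⬝ᵥ g)) • tu j with hq
      have hgg : g ⬝ᵥ g = 1 := by
        have := l2N_sq g
        rw [hg1] at this
        simpa using this.symm
      have hgq : g ⬝ᵥ q = ∑ j ∈ S, tlam j * (tu j ⬝ᵥ g)^2 := by
        rw [hq, dotProduct_sum']
        apply Finset.sum_congr rfl
        intro j _
        rw [dotProduct_smul, smul_eq_mul, dotProduct_comm g (tu j)]
        ring
      have hqg : q ⬝ᵥ g = ∑ j ∈ S, tlam j * (tu j ⬝ᵥ g)^2 := by
        rw [dotProduct_comm, hgq]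
      have hqq : q ⬝ᵥ q = ∑ j ∈ S, tlam j * (tu j ⬝ᵥ g)^2 := by
        rw [hq, sum_dotProduct']
        apply Finset.sum_congr rfl
        intro j hjS
        rw [smul_dotProduct, smul_eq_mul, dotProduct_sum']
        rw [Finset.sum_eq_single_of_mem j hjS (fun l _ hlj => by
          rw [dotProduct_smul, htuL2 j l (Ne.symm hlj), smul_zero])]
        simp only [dotProduct_smul, smul_eq_mul]
        rw [htself j]
        have hT := (htlam_pos j).ne'
        field_simp
      have hkey2 : 0 ≤ (g - q) ⬝ᵥ (g - q) := dself_nonneg _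
      rw [sub_dotProduct, dotProduct_sub, dotProduct_sub, hgg, hgq, hqg, hqq] at hkey2
      linarith
    -- the norm of z
    have hzz : z ⬝ᵥ z = ∑ j ∈ S, (c j / (1 / tlam j - 1 / lam i))^2 * (1 / tlam j) := by
      rw [hz, sum_dotProduct']
      apply Finset.sum_congr rfl
      intro j hjS
      rw [smul_dotProduct, smul_eq_mul, dotProduct_sum']
      rw [Finset.sum_eq_single_of_mem j hjS (fun l _ hlj => by
        rw [dotProduct_smul, htuL2 j l (Ne.symm hlj), smul_zero])]
      rw [dotProduct_smul, smul_eq_mul, htself j]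
      ring
    have hμKpos : 0 < 1 / tlam Kk := by
      have := htlam_pos Kk
      positivity
    have hzbound : l2N z ≤ (1 / tlam Kk) / δ i := by
      have h1 : z ⬝ᵥ z ≤ ((1 / tlam Kk) / δ i)^2 := by
        rw [hzz]
        have hterm : ∀ j ∈ S, (c j / (1 / tlam j - 1 / lam i))^2 * (1 / tlam j)
            ≤ ((1 / tlam Kk) / δ i)^2 * (tlam j * (tu j ⬝ᵥ g)^2) := by
          intro j hjS
          have hjk : k ≤ (j : ℕ) := (Finset.mem_filter.mp hjS).2
          have hd := hμdiff j hjk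
          have hT := (htlam_pos j).ne'
          have hTpos := htlam_pos j
          have hδp := hδpos i
          have hL := hlam_pos.ne'
          have hd2 : (δ i)^2 ≤ (1 / tlam j - 1 / lam i)^2 := by
            have h3 := hδ i j hjk
            calc (δ i)^2 ≤ |1 / tlam j - 1 / lam i|^2 := by
                  apply pow_le_pow_left₀ (hδpos i).le h3
              _ = (1 / tlam j - 1 / lam i)^2 := sq_abs _
          have hμle : 1 / tlam j ≤ 1 / tlam Kk := by
            apply one_div_le_one_div_of_le (htlam_pos Kk)
            apply htmono
            rw [Fin.le_def]
            exact hjk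
          rw [hcval j]
          set dd := 1 / tlam j - 1 / lam i with hdd
          have hXeq : ((tu j ⬝ᵥ g) / dd)^2 * (1 / tlam j)
              = (tlam j * (tu j ⬝ᵥ g)^2) * ((1 / tlam j)^2 * (1 / dd^2)) := by
            field_simp
          have hYeq : ((1 / tlam Kk) / δ i)^2 * (tlam j * (tu j ⬝ᵥ g)^2)
              = (tlam j * (tu j ⬝ᵥ g)^2) * ((1 / tlam Kk)^2 * (1 / (δ i)^2)) := by
            field_simp
          rw [hXeq, hYeq]
          apply mul_le_mul_of_nonneg_left _ (mul_nonneg hTpos.le (sq_nonneg _))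
          apply mul_le_mul
          · exact pow_le_pow_left₀ (one_div_pos.mpr hTpos).le hμle 2
          · exact one_div_le_one_div_of_le (pow_pos hδp 2) hd2
          · positivity
          · positivity
        calc ∑ j ∈ S, (c j / (1 / tlam j - 1 / lam i))^2 * (1 / tlam j)
            ≤ ∑ j ∈ S, ((1 / tlam Kk) / δ i)^2 * (tlam j * (tu j ⬝ᵥ g)^2) :=
              Finset.sum_le_sum hterm
          _ = ((1 / tlam Kk) / δ i)^2 * ∑ j ∈ S, tlam j * (tu j ⬝ᵥ g)^2 :=
              (Finset.mul_sum _ _ _).symm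
          _ ≤ ((1 / tlam Kk) / δ i)^2 * 1 :=
              mul_le_mul_of_nonneg_left hBessel (by positivity)
          _ = ((1 / tlam Kk) / δ i)^2 := mul_one _
      calc l2N z = Real.sqrt (z ⬝ᵥ z) := rfl
        _ ≤ Real.sqrt (((1 / tlam Kk) / δ i)^2) := Real.sqrt_le_sqrt h1
        _ = (1 / tlam Kk) / δ i := Real.sqrt_sq (div_nonneg hμKpos.le (hδpos i).le)
    -- second term bound
    have hT2 : e ⬝ᵥ (A *ᵥ P w) ≤ etaK A P * ((1 / tlam Kk) / δ i) * aN A e := by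
      rw [hT2z]
      have hnegz : -(z ⬝ᵥ s) = (-z) ⬝ᵥ s := (neg_dotProduct z s).symm
      have hl2neg : l2N (-z) = l2N z := by
        rw [show -z = (-1 : ℝ) • z by simp, l2N_smul]
        simp
      calc -(z ⬝ᵥ s) = (-z) ⬝ᵥ s := hnegz
        _ ≤ etaK A P * l2N (-z) * aN A s := hKs (-z) (K.neg_mem hzK)
        _ = etaK A P * l2N z * aN A s := by rw [hl2neg]
        _ ≤ etaK A P * ((1 / tlam Kk) / δ i) * aN A s := by
            apply mul_le_mul_of_nonneg_right _ (aN_nonneg A s)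
            exact mul_le_mul_of_nonneg_left hzbound hetann
        _ ≤ etaK A P * ((1 / tlam Kk) / δ i) * aN A e := by
            exact mul_le_mul_of_nonneg_left haNs_le
              (mul_nonneg hetann (div_nonneg hμKpos.le (hδpos i).le))
    -- combine
    have hfinal : l2N e ≤ aN A e * etaK A P + etaK A P * ((1 / tlam Kk) / δ i) * aN A e := by
      rw [hNe, hsplit]
      exact add_le_add hT1 hT2
    calc l2N e ≤ aN A e * etaK A P + etaK A P * ((1 / tlam Kk) / δ i) * aN A e := hfinal
      _ = (1 + (1 / tlam Kk) / δ i) * etaK A P * aN A e := by ring
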